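/- arXiv:2303.03002 — 6 statements merged into one kernel-verified Lean document; each statement's English description precedes it below -/
import Mathlib

section
/- Let E be a finite-dimensional real inner product space, D ⊆ E a linear subspace, and W := ♭(D) ⊆ E* its image under the musical isomorphism. Let ω be the canonical symplectic form on E × E*, ω((v,α),(w,β)) = β(v) − α(w). Then the restriction of ω to the subspace D × W ⊆ E × E* is nondegenerate, i.e., D × W is a symplectic subspace of (E × E*, ω). -/
open InnerProductSpace

/-- The canonical symplectic form on `E × E*`: `ω((v,α),(w,β)) = β(v) − α(w)`. -/
def canOmega (E : Type*) [NormedAddCommGroup E] [NormedSpace ℝ E] :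
    (E × (E →L[ℝ] ℝ)) → (E × (E →L[ℝ] ℝ)) → ℝ :=
  fun x y => y.2 x.1 - x.2 y.1

/-- Let `D ⊆ E` be a subspace and `W := ♭(D) ⊆ E*` its image under the musical
isomorphism. Then the restriction of the canonical symplectic form `ω` to the subspace
`D × W ⊆ E × E*` is nondegenerate, i.e. `D × W` is a symplectic subspace of `(E × E*, ω)`. -/
theorem restriction_of_canonical_symplectic_form_to_D_prod_flatD_nondegenerate
    (E : Type*) [NormedAddCommGroup E] [InnerProductSpace ℝ E] [FiniteDimensional ℝ E]
    (D : Submodule ℝ E)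
    (W : Submodule ℝ (E →L[ℝ] ℝ))
    (hW : W = Submodule.map (InnerProductSpace.toDual ℝ E).toLinearEquiv.toLinearMap D) :
    ∀ z ∈ D.prod W, (∀ u ∈ D.prod W, canOmega E z u = 0) → z = 0 := by
  rintro ⟨v, α⟩ ⟨hv, hα⟩ h
  rw [hW] at hα
  obtain ⟨d, hd, rfl⟩ := hα
  -- first kill v using u = (0, ♭v)
  have hv0 : v = 0 := by
    have h1 := h (0, (InnerProductSpace.toDual ℝ E).toLinearEquiv v)
      ⟨D.zero_mem, hW ▸ ⟨v, hv, rfl⟩⟩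
    simp only [canOmega, map_zero] at h1
    have : ⟪v, v⟫_ℝ = 0 := by simpa [InnerProductSpace.toDual_apply_apply] using h1
    exact inner_self_eq_zero.mp this
  -- then kill d using u = (d, 0)
  have hd0 : d = 0 := by
    have h2 := h (d, 0) ⟨hd, W.zero_mem⟩
    simp only [canOmega, ContinuousLinearMap.zero_apply, zero_sub, neg_eq_zero] at h2
    have : ⟪d, d⟫_ℝ = 0 := by simpa [InnerProductSpace.toDual_apply_apply] using h2
    exact inner_self_eq_zero.mp this
  simp [hv0, hd0]
end

section
/- Let E be a finite-dimensional real inner product space, D ⊆ E a linear subspace, W := ♭(D) ⊆ E*. Let P : E × E* → E × E* be the linear projection onto D × W along Dᗮ × D°. Then P acts componentwise by orthogonal projections: P(v,α) = (pr_D(v), γ(α)), where pr_D : E → E is the orthogonal projection onto D and γ : E* → E* is the orthogonal projection onto W with respect to the dual inner product ⟪·,·⟫_*. In particular, the second component of P coincides with Eden's projector γ. -/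
open InnerProductSpace

/-- The annihilator `D° = {α ∈ E* : α|_D = 0}` of a subspace `D ⊆ E` inside the
(continuous) dual of `E`. -/
noncomputable def Submodule.contAnnihilator {E : Type*} [NormedAddCommGroup E]
    [InnerProductSpace ℝ E] (D : Submodule ℝ E) : Submodule ℝ (E →L[ℝ] ℝ) where
  carrier := {α | ∀ v ∈ D, α v = 0}
  add_mem' := by
    intro a b ha hb v hv
    simp [ha v hv, hb v hv]
  zero_mem' := by
    intro v hv
    simp
  smul_mem' := by
    intro t a ha v hv
    simp [ha v hv]

/-- The inner product `⟪·,·⟫_*` induced on the dual `E*` by the musical isomorphism: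
`⟪α,β⟫_* = ⟪♯α, ♯β⟫`. -/
noncomputable def dualInner {E : Type*} [NormedAddCommGroup E] [InnerProductSpace ℝ E]
    [FiniteDimensional ℝ E] (α β : E →L[ℝ] ℝ) : ℝ :=
  inner ℝ ((InnerProductSpace.toDual ℝ E).symm α) ((InnerProductSpace.toDual ℝ E).symm β)

/-- Let `D ⊆ E`, `W := ♭(D) ⊆ E*`, and let `P : E × E* → E × E*` be the
projection onto `D × W` along `Dᗮ × D°`. Then `P` acts componentwise by orthogonal
projections: `P(v,α) = (pr_D v, γ α)`, where `pr_D` is the orthogonal projection of `E` onto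
`D` and `γ` is the orthogonal projection of `E*` onto `W` w.r.t. the dual inner product
`⟪·,·⟫_*` (Eden's projector). -/
theorem symplectic_projection_is_componentwise_orthogonal_projection
    (E : Type*) [NormedAddCommGroup E] [InnerProductSpace ℝ E] [FiniteDimensional ℝ E]
    (D : Submodule ℝ E)
    (W : Submodule ℝ (E →L[ℝ] ℝ))
    (hW : W = Submodule.map (InnerProductSpace.toDual ℝ E).toLinearEquiv.toLinearMap D)
    -- `γ` is the orthogonal projection of `E*` onto `W` w.r.t. the dual inner product:
    (γ : (E →L[ℝ] ℝ) → (E →L[ℝ] ℝ))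
    (hγW : ∀ α, γ α ∈ W)
    (hγorth : ∀ α, ∀ w ∈ W, dualInner (α - γ α) w = 0)
    -- `P` is the projection onto `D × W` along `Dᗮ × D°`:
    (P : E × (E →L[ℝ] ℝ) → E × (E →L[ℝ] ℝ))
    (hPmem : ∀ x, P x ∈ D.prod W)
    (hPcompl : ∀ x, x - P x ∈ Dᗮ.prod D.contAnnihilator) :
    ∀ (v : E) (α : E →L[ℝ] ℝ), P (v, α) = ((D.orthogonalProjectionOnto v : E), γ α) := by
  intro v α
  have hmem := hPmem (v, α)
  have hcompl := hPcompl (v, α)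
  rw [Submodule.mem_prod] at hmem hcompl
  obtain ⟨h1, h2⟩ := hmem
  obtain ⟨h1c, h2c⟩ := hcompl
  -- key: dualInner of annihilator elements against W is zero
  have hann : ∀ β : E →L[ℝ] ℝ, β ∈ D.contAnnihilator → ∀ w ∈ W, dualInner β w = 0 := by
    intro β hβ w hw
    rw [hW] at hw
    obtain ⟨d, hd, rfl⟩ := hw
    have hsy : ((InnerProductSpace.toDual ℝ E).symm
        ((InnerProductSpace.toDual ℝ E).toLinearEquiv.toLinearMap d)) = d :=
      (InnerProductSpace.toDual ℝ E).symm_apply_apply d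
    rw [dualInner, hsy, InnerProductSpace.toDual_symm_apply]
    exact hβ d hd
  -- first component
  have hfst : (P (v, α)).1 = (D.orthogonalProjectionOnto v : E) := by
    symm
    rw [← Submodule.starProjection_apply]
    exact Submodule.eq_starProjection_of_mem_of_inner_eq_zero h1 (fun w hw => by rw [real_inner_comm]; exact h1c w hw)
  -- second component
  have hsnd : (P (v, α)).2 = γ α := by
    set β := (P (v, α)).2 - γ α with hβdef
    have hβW : β ∈ W := W.sub_mem h2 (hγW α)
    have hz : dualInner β β = 0 := by
      have e1 : dualInner (α - γ α) β = 0 := hγorth α β hβW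
      have e2 : dualInner (α - (P (v, α)).2) β = 0 := hann _ h2c β hβW
      have : (α - γ α) - (α - (P (v, α)).2) = β := by
        rw [hβdef]; abel
      calc dualInner β β = dualInner (α - γ α) β - dualInner (α - (P (v, α)).2) β := by
            rw [dualInner, dualInner, dualInner, ← this]
            simp only [map_sub, inner_sub_left]
        _ = 0 := by rw [e1, e2, sub_zero]
    have hβ0 : β = 0 := by
      rw [dualInner] at hz
      have := inner_self_eq_zero.mp hz
      have := congrArg (InnerProductSpace.toDual ℝ E) this
      simpa using this
    have := sub_eq_zero.mp hβ0
    exact this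
  exact Prod.ext hfst hsnd
end

section
/- Let E be a finite-dimensional real inner product space, D ⊆ E a linear subspace, W := ♭(D) ⊆ E*, γ : E* → E* the orthogonal projection onto W with respect to ⟪·,·⟫_*, and Γ : E × E* → E × W, Γ(q,p) := (q, γ(p)). Let f : E × W → ℝ be differentiable and set F := f ∘ Γ : E × E* → ℝ. Then for every x ∈ E × E*, if z ∈ E × E* satisfies ω(z, u) = DF(x)(u) for all u ∈ E × E* (i.e., z = X_F(x) is the Hamiltonian vector of F at x), the first component of z lies in D. -/
open InnerProductSpace

set_option maxHeartbeats 1000000 in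
set_option synthInstance.maxHeartbeats 200000 in
/-- Let `D ⊆ E`, `W := ♭(D) ⊆ E*`, `γ : E* → E*` the orthogonal projection
onto `W` w.r.t. `⟪·,·⟫_*`, and `Γ(q,p) := (q, γ(p))`. Let `f : E × W → ℝ` be differentiable and
`F := f ∘ Γ`. Then for every `x ∈ E × E*`, if `z` satisfies `ω(z,u) = DF(x)(u)` for all `u`
(i.e. `z = X_F(x)` is the Hamiltonian vector of `F` at `x`), then the first component of `z`
lies in `D`. -/
theorem hamiltonian_vector_of_gamma_extension_is_D_horizontal
    (E : Type*) [NormedAddCommGroup E] [InnerProductSpace ℝ E] [FiniteDimensional ℝ E]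
    (D : Submodule ℝ E)
    (W : Submodule ℝ (E →L[ℝ] ℝ))
    (hW : W = Submodule.map (InnerProductSpace.toDual ℝ E).toLinearEquiv.toLinearMap D)
    (γ : (E →L[ℝ] ℝ) → (E →L[ℝ] ℝ))
    (hγW : ∀ α, γ α ∈ W)
    (hγorth : ∀ α, ∀ w ∈ W, dualInner (α - γ α) w = 0)
    (f : E × ↥W → ℝ) (hf : Differentiable ℝ f)
    (F : E × (E →L[ℝ] ℝ) → ℝ)
    (hF : ∀ x : E × (E →L[ℝ] ℝ), F x = f (x.1, ⟨γ x.2, hγW x.2⟩)) :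
    ∀ (x z : E × (E →L[ℝ] ℝ)),
      (∀ u : E × (E →L[ℝ] ℝ), canOmega E z u = fderiv ℝ F x u) → z.1 ∈ D := by
  intro x z hz
  set ι := InnerProductSpace.toDual ℝ E with hι
  -- γ agrees with ι ∘ orthogonalProjection D ∘ ι.symm
  have hγ : ∀ α, γ α = ι (D.orthogonalProjectionOnto (ι.symm α)) := by
    intro α
    have hmem : (ι (D.orthogonalProjectionOnto (ι.symm α)) : E →L[ℝ] ℝ) ∈ W := by
      rw [hW]
      exact ⟨D.orthogonalProjectionOnto (ι.symm α), (D.orthogonalProjectionOnto (ι.symm α)).2, rfl⟩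
    -- the difference lies in W and is orthogonal to itself
    set c := (ι (D.orthogonalProjectionOnto (ι.symm α)) : E →L[ℝ] ℝ) with hc
    have horth2 : ∀ w ∈ W, dualInner (α - c) w = 0 := by
      intro w hw
      obtain ⟨d, hd, rfl⟩ := hW ▸ hw
      have : ι.symm (α - c) = ι.symm α - D.orthogonalProjectionOnto (ι.symm α) := by
        simp [hc, map_sub]
      unfold dualInner
      rw [this]
      have h1 : ι.symm ((InnerProductSpace.toDual ℝ E).toLinearEquiv d) = d := by
        exact ι.symm_apply_apply d
      rw [show (ι.toLinearEquiv.toLinearMap d : E →L[ℝ] ℝ) = ι d from rfl,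
        ι.symm_apply_apply d]
      exact Submodule.starProjection_inner_eq_zero (ι.symm α) d hd
    have hdiff : γ α - c ∈ W := W.sub_mem (hγW α) hmem
    have : dualInner (γ α - c) (γ α - c) = 0 := by
      have e1 := hγorth α (γ α - c) hdiff
      have e2 := horth2 (γ α - c) hdiff
      have : dualInner (γ α - c) (γ α - c)
          = dualInner (α - c) (γ α - c) - dualInner (α - γ α) (γ α - c) := by
        unfold dualInner
        simp only [map_sub, inner_sub_left]
        ring
      rw [this, e1, e2, sub_zero]
    have hz0 : ι.symm (γ α - c) = 0 := by
      have := inner_self_eq_zero (𝕜 := ℝ) (x := ι.symm (γ α - c)) |>.mp this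
      exact this
    have : γ α - c = 0 := by
      have := congrArg ι hz0
      rwa [ι.apply_symm_apply, map_zero] at this
    exact sub_eq_zero.mp this
  -- build the continuous linear map realizing Γ
  classical
  let ℓ : (E →L[ℝ] ℝ) →ₗ[ℝ] ↥W :=
    { toFun := fun α => ⟨γ α, hγW α⟩
      map_add' := by
        intro a b
        apply Subtype.ext
        simp only [hγ, map_add, Submodule.coe_add]
      map_smul' := by
        intro r a
        apply Subtype.ext
        simp only [hγ, map_smul, RingHom.id_apply, Submodule.coe_smul] }
  let φ : (E × (E →L[ℝ] ℝ)) →L[ℝ] (E × ↥W) :=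
    (ContinuousLinearMap.fst ℝ E (E →L[ℝ] ℝ)).prod
      ((LinearMap.toContinuousLinearMap (𝕜 := ℝ) (F' := ↥W) ℓ).comp (ContinuousLinearMap.snd ℝ E (E →L[ℝ] ℝ)))
  have hφ : ∀ y : E × (E →L[ℝ] ℝ), φ y = (y.1, ⟨γ y.2, hγW y.2⟩) := fun y => rfl
  have hFφ : F = fun y => f (φ y) := by
    funext y
    rw [hF y, hφ y]
  have hFd : HasFDerivAt F ((fderiv ℝ f (φ x)).comp φ) x := by
    rw [hFφ]
    have h2 : HasFDerivAt (φ : _ → E × ↥W) φ x := by apply ContinuousLinearMap.hasFDerivAt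
    exact HasFDerivAt.comp (𝕜 := ℝ) (E := E × (E →L[ℝ] ℝ)) (F := E × ↥W) (G := ℝ) (f := φ) (f' := φ) (g := f) x ((hf (φ x)).hasFDerivAt) h2
  have hfd : fderiv ℝ F x = (fderiv ℝ f (φ x)).comp φ := hFd.fderiv
  -- now show z.1 ∈ Dᗮᗮ = D
  rw [← D.orthogonal_orthogonal]
  intro v hv
  have key := hz (0, ι v)
  have hγv : γ (ι v) = 0 := by
    rw [hγ, ι.symm_apply_apply,
      Submodule.orthogonalProjectionOnto_apply_of_mem_orthogonal hv]
    simp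
  have hφv : φ ((0 : E), (ι v : E →L[ℝ] ℝ)) = 0 := by
    have h0 : φ ((0 : E), (ι v : E →L[ℝ] ℝ)) = ((0 : E), (⟨γ (ι v), hγW _⟩ : ↥W)) := rfl
    rw [h0]
    exact Prod.ext rfl (Subtype.ext hγv)
  rw [hfd] at key
  rw [ContinuousLinearMap.comp_apply, hφv, map_zero] at key
  simp only [canOmega, ContinuousLinearMap.zero_apply, ContinuousLinearMap.map_zero] at key
  have : (ι v) z.1 = 0 := by simpa using key
  have : inner ℝ v z.1 = (0:ℝ) := by
    rw [← this]; rfl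
  exact this
end

section
/- Let E be a finite-dimensional real inner product space, D ⊆ E a linear subspace, W := ♭(D) ⊆ E*, γ : E* → E* the orthogonal projection onto W with respect to ⟪·,·⟫_*, and ω the canonical symplectic form on E × E*. Let ξ = (ξ₁, ξ₂) ∈ E × E* with ξ₁ ∈ D. Then z := (ξ₁, γ(ξ₂)) is the unique element of E × W such that the linear functional u ↦ ω(z,u) − ω(ξ,u) on E × E* vanishes on {0} × E* and its restriction to E × {0} belongs to the annihilator D°. Moreover z = P(ξ), where P is the projection onto D × W along Dᗮ × D°. -/
open InnerProductSpace

/-- Let `ξ = (ξ₁, ξ₂) ∈ E × E*` with `ξ₁ ∈ D`. Then `z := (ξ₁, γ(ξ₂))` is the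
unique element of `E × W` such that the linear functional `u ↦ ω(z,u) − ω(ξ,u)` on `E × E*`
vanishes on `{0} × E*` and its restriction to `E × {0}` belongs to the annihilator `D°`.
Moreover `z = P(ξ)`, where `P` is the projection onto `D × W` along `Dᗮ × D°`. -/
theorem nonholonomic_projection_of_hamiltonian_vector
    (E : Type*) [NormedAddCommGroup E] [InnerProductSpace ℝ E] [FiniteDimensional ℝ E]
    (D : Submodule ℝ E)
    (W : Submodule ℝ (E →L[ℝ] ℝ))
    (hW : W = Submodule.map (InnerProductSpace.toDual ℝ E).toLinearEquiv.toLinearMap D)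
    -- `γ` is the orthogonal projection of `E*` onto `W` w.r.t. the dual inner product:
    (γ : (E →L[ℝ] ℝ) → (E →L[ℝ] ℝ))
    (hγW : ∀ α, γ α ∈ W)
    (hγorth : ∀ α, ∀ w ∈ W, dualInner (α - γ α) w = 0)
    -- `P` is the projection onto `D × W` along `Dᗮ × D°`:
    (P : E × (E →L[ℝ] ℝ) → E × (E →L[ℝ] ℝ))
    (hPmem : ∀ x, P x ∈ D.prod W)
    (hPcompl : ∀ x, x - P x ∈ Dᗮ.prod D.contAnnihilator)
    (ξ : E × (E →L[ℝ] ℝ)) (hξ : ξ.1 ∈ D) :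
    ((γ ξ.2 ∈ W) ∧
      (∀ β : E →L[ℝ] ℝ,
        canOmega E (ξ.1, γ ξ.2) (0, β) - canOmega E ξ (0, β) = 0) ∧
      (∀ v ∈ D,
        canOmega E (ξ.1, γ ξ.2) (v, 0) - canOmega E ξ (v, 0) = 0)) ∧
    (∀ z' : E × (E →L[ℝ] ℝ), z'.2 ∈ W →
      (∀ β : E →L[ℝ] ℝ, canOmega E z' (0, β) - canOmega E ξ (0, β) = 0) →
      (∀ v ∈ D, canOmega E z' (v, 0) - canOmega E ξ (v, 0) = 0) →
      z' = (ξ.1, γ ξ.2)) ∧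
    (ξ.1, γ ξ.2) = P ξ := by

  -- `β v = ⟪♯β, v⟫`
  have keval : ∀ (β : E →L[ℝ] ℝ) (v : E),
      β v = inner ℝ ((InnerProductSpace.toDual ℝ E).symm β) v := by
    intro β v
    conv_lhs => rw [← (InnerProductSpace.toDual ℝ E).apply_symm_apply β]
    rw [InnerProductSpace.toDual_apply_apply]
  -- the orthogonality of γ implies vanishing of `α - γ α` on D
  have fact1 : ∀ (α : E →L[ℝ] ℝ), ∀ v ∈ D, (α - γ α) v = 0 := by
    intro α v hv
    have hvW : (InnerProductSpace.toDual ℝ E) v ∈ W := by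
      rw [hW]
      exact Submodule.mem_map.2 ⟨v, hv, rfl⟩
    have h := hγorth α _ hvW
    unfold dualInner at h
    rw [LinearIsometryEquiv.symm_apply_apply] at h
    rw [keval (α - γ α) v]
    exact h
  -- an element of W vanishing on D is zero
  have factW : ∀ δ ∈ W, (∀ v ∈ D, δ v = 0) → δ = 0 := by
    intro δ hδ hvan
    rw [hW] at hδ
    obtain ⟨d, hd, rfl⟩ := Submodule.mem_map.1 hδ
    have h0 : (InnerProductSpace.toDual ℝ E) d d = 0 := hvan d hd
    rw [InnerProductSpace.toDual_apply_apply] at h0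
    have : d = 0 := by rwa [inner_self_eq_zero] at h0
    simp [this]
  have fact1' : ∀ v ∈ D, (γ ξ.2) v = ξ.2 v := by
    intro v hv
    have := fact1 ξ.2 v hv
    simp only [ContinuousLinearMap.sub_apply] at this
    linarith
  refine ⟨⟨hγW ξ.2, ?_, ?_⟩, ?_, ?_⟩
  · intro β; simp [canOmega]
  · intro v hv
    simp [canOmega, fact1' v hv]
  · rintro ⟨z1, z2⟩ hzW h1 h2
    have hz1 : z1 = ξ.1 := by
      have h := h1 ((InnerProductSpace.toDual ℝ E) (z1 - ξ.1))
      simp only [canOmega, map_zero, InnerProductSpace.toDual_apply_apply, sub_zero] at h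
      have h' : (inner ℝ (z1 - ξ.1) (z1 - ξ.1) : ℝ) = 0 := by
        rw [inner_sub_right]; linarith
      rw [inner_self_eq_zero, sub_eq_zero] at h'
      exact h'
    have hz2 : z2 = γ ξ.2 := by
      have hmem : z2 - γ ξ.2 ∈ W := W.sub_mem hzW (hγW ξ.2)
      have hvan : ∀ v ∈ D, (z2 - γ ξ.2) v = 0 := by
        intro v hv
        have h := h2 v hv
        simp only [canOmega, ContinuousLinearMap.zero_apply, map_zero, zero_sub, sub_zero] at h
        have := fact1' v hv
        simp only [ContinuousLinearMap.sub_apply]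
        linarith
      have := factW _ hmem hvan
      rwa [sub_eq_zero] at this
    simp [hz1, hz2]
  · have hPm := hPmem ξ
    have hPc := hPcompl ξ
    rw [Submodule.mem_prod] at hPm hPc
    have hfst : ξ.1 = (P ξ).1 := by
      have h1 : ξ.1 - (P ξ).1 ∈ Dᗮ := hPc.1
      have h2 : ξ.1 - (P ξ).1 ∈ D := D.sub_mem hξ hPm.1
      have h0 : (inner ℝ (ξ.1 - (P ξ).1) (ξ.1 - (P ξ).1) : ℝ) = 0 :=
        (Submodule.mem_orthogonal D _).1 h1 _ h2
      rw [inner_self_eq_zero, sub_eq_zero] at h0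
      exact h0
    have hsnd : γ ξ.2 = (P ξ).2 := by
      have hmem : γ ξ.2 - (P ξ).2 ∈ W := W.sub_mem (hγW ξ.2) hPm.2
      have hann : ∀ v ∈ D, (ξ.2 - (P ξ).2) v = 0 := hPc.2
      have hvan : ∀ v ∈ D, (γ ξ.2 - (P ξ).2) v = 0 := by
        intro v hv
        have h := hann v hv
        simp only [ContinuousLinearMap.sub_apply] at h ⊢
        have := fact1' v hv
        linarith
      have := factW _ hmem hvan
      rwa [sub_eq_zero] at this
    exact Prod.ext hfst hsnd
end

section
/- Let E be a finite-dimensional real inner product space, D ⊆ E a linear subspace, W := ♭(D) ⊆ E*, γ : E* → E* the orthogonal projection onto W with respect to ⟪·,·⟫_*, Γ(q,p) := (q, γ(p)), ω the canonical symplectic form on E × E*, and P the projection onto D × W along Dᗮ × D°. For differentiable F : E × E* → ℝ let X_F(x) be the unique element with ω(X_F(x), u) = DF(x)(u) for all u. Then for all smooth f, g : E × W → ℝ and every m ∈ E × W, ω(P(X_{f∘Γ}(m)), P(X_{g∘Γ}(m))) = ω(X_{f∘Γ}(m), X_{g∘Γ}(m)); that is, the nonholonomic bracket {f,g}_nh(m)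 := ω(P(X_{f∘Γ}(m)), P(X_{g∘Γ}(m))) coincides with the Eden bracket {f,g}_E(m) := ω(X_{f∘Γ}(m), X_{g∘Γ}(m)). -/
open InnerProductSpace

set_option maxHeartbeats 2000000
set_option synthInstance.maxHeartbeats 400000

/-- With `Γ(q,p) := (q, γ(p))` and `P` the projection onto `D × W` along
`Dᗮ × D°`, for all smooth `f, g : E × W → ℝ` and every `m ∈ E × W`,
`ω(𝒫(X_{f∘Γ}(m)), 𝒫(X_{g∘Γ}(m))) = ω(X_{f∘Γ}(m), X_{g∘Γ}(m))`; i.e. the nonholonomic bracket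
`{f,g}_nh` coincides with the Eden bracket `{f,g}_E`. -/
theorem nonholonomic_bracket_eq_eden_bracket
    (E : Type*) [NormedAddCommGroup E] [InnerProductSpace ℝ E] [FiniteDimensional ℝ E]
    (D : Submodule ℝ E)
    (W : Submodule ℝ (E →L[ℝ] ℝ))
    (hW : W = Submodule.map (InnerProductSpace.toDual ℝ E).toLinearEquiv.toLinearMap D)
    -- `γ` is the orthogonal projection of `E*` onto `W` w.r.t. the dual inner product:
    (γ : (E →L[ℝ] ℝ) → (E →L[ℝ] ℝ))
    (hγW : ∀ α, γ α ∈ W)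
    (hγorth : ∀ α, ∀ w ∈ W, dualInner (α - γ α) w = 0)
    -- `P` is the projection onto `D × W` along `Dᗮ × D°`:
    (P : E × (E →L[ℝ] ℝ) → E × (E →L[ℝ] ℝ))
    (hPmem : ∀ x, P x ∈ D.prod W)
    (hPcompl : ∀ x, x - P x ∈ Dᗮ.prod D.contAnnihilator)
    -- `X_F(x)` is the (unique) Hamiltonian vector of `F` at `x`:
    (XF : (E × (E →L[ℝ] ℝ) → ℝ) → E × (E →L[ℝ] ℝ) → E × (E →L[ℝ] ℝ))
    (hXF : ∀ (F : E × (E →L[ℝ] ℝ) → ℝ) (x : E × (E →L[ℝ] ℝ)), DifferentiableAt ℝ F x →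
      ∀ u, canOmega E (XF F x) u = fderiv ℝ F x u)
    (f g : E × ↥W → ℝ) (hf : ContDiff ℝ (⊤ : ℕ∞) f) (hg : ContDiff ℝ (⊤ : ℕ∞) g)
    -- `Ff = f ∘ Γ` and `Fg = g ∘ Γ`:
    (Ff Fg : E × (E →L[ℝ] ℝ) → ℝ)
    (hFf : ∀ x : E × (E →L[ℝ] ℝ), Ff x = f (x.1, ⟨γ x.2, hγW x.2⟩))
    (hFg : ∀ x : E × (E →L[ℝ] ℝ), Fg x = g (x.1, ⟨γ x.2, hγW x.2⟩)) :
    ∀ m : E × ↥W,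
      canOmega E (P (XF Ff (m.1, ↑m.2))) (P (XF Fg (m.1, ↑m.2))) =
        canOmega E (XF Ff (m.1, ↑m.2)) (XF Fg (m.1, ↑m.2)) := by
  classical
  -- Basic facts about the dual inner product
  have hdi_sub_left : ∀ a b w : E →L[ℝ] ℝ,
      dualInner (a - b) w = dualInner a w - dualInner b w := by
    intro a b w
    simp [dualInner, map_sub, inner_sub_left]
  have hdi_add_left : ∀ a b w : E →L[ℝ] ℝ,
      dualInner (a + b) w = dualInner a w + dualInner b w := by
    intro a b w
    simp [dualInner, map_add, inner_add_left]
  have hdi_smul_left : ∀ (c : ℝ) (a w : E →L[ℝ] ℝ),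
      dualInner (c • a) w = c * dualInner a w := by
    intro c a w
    simp [dualInner, map_smul, inner_smul_left]
  have hdi_self : ∀ α : E →L[ℝ] ℝ, dualInner α α = 0 → α = 0 := by
    intro α h
    have h0 : (InnerProductSpace.toDual ℝ E).symm α = 0 := by
      rw [← @inner_self_eq_zero ℝ]
      exact h
    have := congrArg (InnerProductSpace.toDual ℝ E) h0
    simpa using this
  -- elements of the annihilator are ⊥ W
  have hann_perp : ∀ β : E →L[ℝ] ℝ, (∀ v ∈ D, β v = 0) → ∀ w ∈ W, dualInner β w = 0 := by
    intro β hβ w hw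
    rw [hW] at hw
    obtain ⟨d, hd, rfl⟩ := hw
    have h1 : dualInner β ((InnerProductSpace.toDual ℝ E).toLinearEquiv.toLinearMap d) =
        inner ℝ ((InnerProductSpace.toDual ℝ E).symm β) d := by
      simp [dualInner]
    rw [h1]
    have h2 : β d = inner ℝ ((InnerProductSpace.toDual ℝ E).symm β) d := by
      conv_lhs => rw [← (InnerProductSpace.toDual ℝ E).apply_symm_apply β]
      simp [InnerProductSpace.toDual_apply_apply]
    rw [← h2]
    exact hβ d hd
  -- γ kills the annihilator
  have hγ0 : ∀ β : E →L[ℝ] ℝ, (∀ v ∈ D, β v = 0) → γ β = 0 := by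
    intro β hβ
    apply hdi_self
    have h1 : dualInner (β - γ β) (γ β) = 0 := hγorth β (γ β) (hγW β)
    have h2 : dualInner β (γ β) = 0 := hann_perp β hβ (γ β) (hγW β)
    have h3 := hdi_sub_left β (γ β) (γ β)
    rw [h1, h2] at h3
    linarith
  -- γ is linear
  have hγ_perp_self : ∀ z : E →L[ℝ] ℝ, z ∈ W → (∀ w ∈ W, dualInner z w = 0) → z = 0 := by
    intro z hz h
    exact hdi_self z (h z hz)
  have hγadd : ∀ α β, γ (α + β) = γ α + γ β := by
    intro α β
    have hz : γ (α + β) - (γ α + γ β) = 0 := by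
      apply hγ_perp_self _ (Submodule.sub_mem W (hγW _) (Submodule.add_mem W (hγW _) (hγW _)))
      intro w hw
      have key : γ (α + β) - (γ α + γ β)
          = (α - γ α) + (β - γ β) - ((α + β) - γ (α + β)) := by abel
      rw [key, hdi_sub_left, hdi_add_left, hγorth α w hw, hγorth β w hw,
        hγorth (α + β) w hw]
      ring
    exact sub_eq_zero.mp hz
  have hγsmul : ∀ (c : ℝ) α, γ (c • α) = c • γ α := by
    intro c α
    have hz : γ (c • α) - c • γ α = 0 := by
      apply hγ_perp_self _ (Submodule.sub_mem W (hγW _) (Submodule.smul_mem W c (hγW _)))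
      intro w hw
      have key : γ (c • α) - c • γ α
          = c • (α - γ α) - ((c • α) - γ (c • α)) := by
        rw [smul_sub]; abel
      rw [key, hdi_sub_left, hdi_smul_left, hγorth α w hw, hγorth (c • α) w hw]
      ring
    exact sub_eq_zero.mp hz
  -- package Γ as a continuous linear map L : E × E* → E × W
  let γlin : (E →L[ℝ] ℝ) →ₗ[ℝ] ↥W :=
    { toFun := fun β => ⟨γ β, hγW β⟩
      map_add' := fun α β => Subtype.ext (hγadd α β)
      map_smul' := fun c α => Subtype.ext (hγsmul c α) }
  let γL : (E →L[ℝ] ℝ) →L[ℝ] ↥W := LinearMap.toContinuousLinearMap (𝕜 := ℝ) (E := E →L[ℝ] ℝ) (F' := ↥W) γlin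
  let L : (E × (E →L[ℝ] ℝ)) →L[ℝ] E × ↥W :=
    (ContinuousLinearMap.id ℝ E).prodMap γL
  have hL : ∀ x : E × (E →L[ℝ] ℝ), L x = (x.1, ⟨γ x.2, hγW x.2⟩) := fun x => rfl
  have hFfL : Ff = f ∘ L := by
    funext x; rw [hFf x]; rfl
  have hFgL : Fg = g ∘ L := by
    funext x; rw [hFg x]; rfl
  intro m
  set m0 : E × (E →L[ℝ] ℝ) := (m.1, (m.2 : E →L[ℝ] ℝ)) with hm0
  have hfd : DifferentiableAt ℝ f (L m0) := (hf.differentiable (by simp)).differentiableAt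
  have hgd : DifferentiableAt ℝ g (L m0) := (hg.differentiable (by simp)).differentiableAt
  have hFfdiff : DifferentiableAt ℝ Ff m0 := by
    rw [hFfL]; exact hfd.comp m0 (L.differentiableAt (𝕜 := ℝ) (F := E × ↥W))
  have hFgdiff : DifferentiableAt ℝ Fg m0 := by
    rw [hFgL]; exact hgd.comp m0 (L.differentiableAt (𝕜 := ℝ) (F := E × ↥W))
  -- the derivatives vanish on {0} × D°
  have hdFf : ∀ β : E →L[ℝ] ℝ, (∀ v ∈ D, β v = 0) →
      fderiv ℝ Ff m0 ((0 : E), β) = 0 := by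
    intro β hβ
    rw [hFfL, fderiv_comp m0 hfd (L.differentiableAt (𝕜 := ℝ) (F := E × ↥W)), (L.fderiv (𝕜 := ℝ) (F := E × ↥W))]
    have hLβ : L ((0 : E), β) = 0 := by
      rw [hL]
      have : γ β = 0 := hγ0 β hβ
      exact Prod.ext rfl (Subtype.ext this)
    simp [ContinuousLinearMap.comp_apply, hLβ]
  have hdFg : ∀ β : E →L[ℝ] ℝ, (∀ v ∈ D, β v = 0) →
      fderiv ℝ Fg m0 ((0 : E), β) = 0 := by
    intro β hβ
    rw [hFgL, fderiv_comp m0 hgd (L.differentiableAt (𝕜 := ℝ) (F := E × ↥W)), (L.fderiv (𝕜 := ℝ) (F := E × ↥W))]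
    have hLβ : L ((0 : E), β) = 0 := by
      rw [hL]
      have : γ β = 0 := hγ0 β hβ
      exact Prod.ext rfl (Subtype.ext this)
    simp [ContinuousLinearMap.comp_apply, hLβ]
  -- hence annihilator elements kill the first component of the Hamiltonian vectors
  have hXann : ∀ (F : E × (E →L[ℝ] ℝ) → ℝ), DifferentiableAt ℝ F m0 →
      (∀ β : E →L[ℝ] ℝ, (∀ v ∈ D, β v = 0) → fderiv ℝ F m0 ((0 : E), β) = 0) →
      ∀ β : E →L[ℝ] ℝ, (∀ v ∈ D, β v = 0) → β (XF F m0).1 = 0 := by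
    intro F hFdiff hdF β hβ
    have := hXF F m0 hFdiff ((0 : E), β)
    rw [hdF β hβ] at this
    simpa [canOmega] using this
  -- the first components lie in D
  have hfirst : ∀ (F : E × (E →L[ℝ] ℝ) → ℝ), DifferentiableAt ℝ F m0 →
      (∀ β : E →L[ℝ] ℝ, (∀ v ∈ D, β v = 0) → fderiv ℝ F m0 ((0 : E), β) = 0) →
      (XF F m0).1 ∈ D := by
    intro F hFdiff hdF
    set v := (XF F m0).1 with hv
    set w := v - (D.orthogonalProjectionOnto v : E) with hw
    have hwD : w ∈ Dᗮ := D.sub_starProjection_mem_orthogonal v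
    have hβann : ∀ u ∈ D, (InnerProductSpace.toDual ℝ E w) u = 0 := by
      intro u hu
      rw [InnerProductSpace.toDual_apply_apply, real_inner_comm]
      exact hwD u hu
    have h0 : inner ℝ w v = 0 := by
      have := hXann F hFdiff hdF _ hβann
      rwa [InnerProductSpace.toDual_apply_apply] at this
    have hsplit : v = w + (D.orthogonalProjectionOnto v : E) := by rw [hw]; abel
    have hperp : inner ℝ w ((D.orthogonalProjectionOnto v : E)) = 0 := by
      rw [real_inner_comm]
      exact hwD _ (D.orthogonalProjectionOnto v).2
    have hinner : inner ℝ w v = inner ℝ w w + inner ℝ w ((D.orthogonalProjectionOnto v : E)) := by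
      conv_lhs => rw [hsplit]
      rw [inner_add_right]
    have hw0 : w = 0 := by
      apply (@inner_self_eq_zero ℝ _ _ _ _).mp
      rw [hinner, hperp] at h0
      linarith
    have hveq : v = (D.orthogonalProjectionOnto v : E) := by
      have h := hw0
      rw [hw] at h
      exact sub_eq_zero.mp h
    have hm : ((D.orthogonalProjectionOnto v : E)) ∈ D := (D.orthogonalProjectionOnto v).2
    rwa [← hveq] at hm
  have hXf1 : (XF Ff m0).1 ∈ D := hfirst Ff hFfdiff hdFf
  have hXg1 : (XF Fg m0).1 ∈ D := hfirst Fg hFgdiff hdFg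
  -- P fixes the first components
  have hPfix : ∀ x : E × (E →L[ℝ] ℝ), x.1 ∈ D → (P x).1 = x.1 := by
    intro x hx
    have h1 : (P x).1 ∈ D := ((Submodule.mem_prod).mp (hPmem x)).1
    have h2 : (x - P x).1 ∈ Dᗮ := ((Submodule.mem_prod).mp (hPcompl x)).1
    have h3 : x.1 - (P x).1 ∈ Dᗮ := h2
    have h4 : x.1 - (P x).1 ∈ D := Submodule.sub_mem D hx h1
    have h5 : inner ℝ (x.1 - (P x).1) (x.1 - (P x).1) = 0 := h3 _ h4
    have h6 : x.1 - (P x).1 = 0 := inner_self_eq_zero.mp h5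
    have := sub_eq_zero.mp h6
    exact this.symm
  have hPf1 : (P (XF Ff m0)).1 = (XF Ff m0).1 := hPfix _ hXf1
  have hPg1 : (P (XF Fg m0)).1 = (XF Fg m0).1 := hPfix _ hXg1
  -- second components differ by annihilator elements
  have hPf2 : ∀ v ∈ D, ((XF Ff m0).2 - (P (XF Ff m0)).2) v = 0 :=
    ((Submodule.mem_prod).mp (hPcompl (XF Ff m0))).2
  have hPg2 : ∀ v ∈ D, ((XF Fg m0).2 - (P (XF Fg m0)).2) v = 0 :=
    ((Submodule.mem_prod).mp (hPcompl (XF Fg m0))).2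
  have e1 : (P (XF Fg m0)).2 (XF Ff m0).1 = (XF Fg m0).2 (XF Ff m0).1 := by
    have := hPg2 _ hXf1
    simp only [ContinuousLinearMap.sub_apply] at this
    linarith
  have e2 : (P (XF Ff m0)).2 (XF Fg m0).1 = (XF Ff m0).2 (XF Fg m0).1 := by
    have := hPf2 _ hXg1
    simp only [ContinuousLinearMap.sub_apply] at this
    linarith
  show canOmega E (P (XF Ff m0)) (P (XF Fg m0)) = canOmega E (XF Ff m0) (XF Fg m0)
  simp only [canOmega, hPf1, hPg1, e1, e2]
end

section
/- Let E be a finite-dimensional real inner product space, V : E → ℝ a C¹ function, and define H : E × E* → ℝ by H(q,p) := ½⟪p,p⟫_* + V(q). Let c : ℝ → E be twice differentiable. Then c satisfies the Euler–Lagrange equations for the mechanical Lagrangian L(q,v) = ½⟪v,v⟫ − V(q), i.e., (d/dt)(c'(t)) = −♯(DV(c(t))) for all t, if and only if the curve t ↦ (c(t), ♭(c'(t))) in E × E* satisfies Hamilton's equations for H, i.e., its derivative at each t equals X_H(c(t), ♭(c'(t))), where X_H(x) is the unique element with ω(X_H(x), u) = DH(x)(u) for all u, and ω is the canonical symplectic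 form on E × E*. -/
open InnerProductSpace

/-- A twice differentiable curve `c : ℝ → E` satisfies the Euler–Lagrange
equations for the mechanical Lagrangian `L(q,v) = ½⟪v,v⟫ − V(q)`, i.e.
`(d/dt)(c'(t)) = −♯(DV(c(t)))`, if and only if the Legendre-transformed curve
`t ↦ (c(t), ♭(c'(t)))` in `E × E*` satisfies Hamilton's equations for
`H(q,p) = ½⟪p,p⟫_* + V(q)`, i.e. its derivative equals `X_H` along the curve. -/
theorem euler_lagrange_iff_hamilton
    (E : Type*) [NormedAddCommGroup E] [InnerProductSpace ℝ E] [FiniteDimensional ℝ E]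
    (V : E → ℝ) (hV : ContDiff ℝ 1 V)
    (H : E × (E →L[ℝ] ℝ) → ℝ)
    (hH : ∀ x : E × (E →L[ℝ] ℝ), H x = (1 / 2 : ℝ) * dualInner x.2 x.2 + V x.1)
    -- `X_H(x)` is the (unique) Hamiltonian vector of `H` at `x`:
    (XH : E × (E →L[ℝ] ℝ) → E × (E →L[ℝ] ℝ))
    (hXH : ∀ x u, canOmega E (XH x) u = fderiv ℝ H x u)
    (c : ℝ → E) (hc : Differentiable ℝ c) (hc' : Differentiable ℝ (deriv c)) :
    (∀ t : ℝ, deriv (deriv c) t =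
        -(InnerProductSpace.toDual ℝ E).symm (fderiv ℝ V (c t))) ↔
    (∀ t : ℝ,
      deriv (fun s : ℝ =>
        ((c s, (InnerProductSpace.toDual ℝ E (deriv c s) : E →L[ℝ] ℝ)) :
          E × (E →L[ℝ] ℝ))) t =
      XH (c t, InnerProductSpace.toDual ℝ E (deriv c t))) := by
  set φ := (toDual ℝ E).symm with hφdef
  set φL : (E →L[ℝ] ℝ) →L[ℝ] E :=
    ((toDual ℝ E).symm.toContinuousLinearEquiv : _ ≃L[ℝ] E).toContinuousLinearMap with hφL
  have hφLapp : ∀ α, φL α = φ α := fun α => rfl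
  -- derivative of H
  have hHfun : H = fun y : E × (E →L[ℝ] ℝ) =>
      (1 / 2 : ℝ) * inner ℝ (φ y.2) (φ y.2) + V y.1 := funext fun y => hH y
  have hDH : ∀ x u : E × (E →L[ℝ] ℝ),
      fderiv ℝ H x u = dualInner x.2 u.2 + fderiv ℝ V x.1 u.1 := by
    intro x u
    have h1 : HasFDerivAt (fun y : E × (E →L[ℝ] ℝ) => φ y.2)
        (φL.comp (ContinuousLinearMap.snd ℝ E (E →L[ℝ] ℝ))) x :=
      ((toDual ℝ E).symm.toContinuousLinearEquiv.hasFDerivAt).comp x hasFDerivAt_snd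
    have h2 := (h1.inner ℝ h1).const_mul ((1 : ℝ) / 2)
    have h4 : HasFDerivAt (fun y : E × (E →L[ℝ] ℝ) => V y.1)
        ((fderiv ℝ V x.1).comp (ContinuousLinearMap.fst ℝ E (E →L[ℝ] ℝ))) x :=
      ((hV.differentiable one_ne_zero x.1).hasFDerivAt).comp x hasFDerivAt_fst
    have h5 : HasFDerivAt (fun y : E × (E →L[ℝ] ℝ) =>
      (1 / 2 : ℝ) * inner ℝ (φ y.2) (φ y.2) + V y.1) _ x := h2.add h4
    rw [← hHfun] at h5
    rw [h5.fderiv]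
    simp only [ContinuousLinearMap.add_apply, ContinuousLinearMap.coe_smul',
      Pi.smul_apply, ContinuousLinearMap.comp_apply, ContinuousLinearMap.prod_apply,
      ContinuousLinearMap.coe_fst', ContinuousLinearMap.coe_snd',
      fderivInnerCLM_apply, smul_eq_mul, hφLapp, dualInner]
    rw [real_inner_comm (φ u.2) (φ x.2)]
    ring
  -- the Hamiltonian vector field
  have hXH2 : ∀ x : E × (E →L[ℝ] ℝ), (XH x).2 = -(fderiv ℝ V x.1) := by
    intro x
    ext w
    have h := hXH x (w, 0)
    simp only [canOmega, hDH, ContinuousLinearMap.zero_apply, dualInner, map_zero,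
      inner_zero_right, zero_add, zero_sub] at h
    simp only [ContinuousLinearMap.neg_apply]
    linarith [h]
  have hXH1 : ∀ x : E × (E →L[ℝ] ℝ), (XH x).1 = φ x.2 := by
    intro x
    rw [NormedSpace.eq_iff_forall_dual_eq ℝ]
    intro g
    have h := hXH x (0, g)
    simp only [canOmega, hDH] at h
    have h' : g (XH x).1 = dualInner x.2 g := by simpa using h
    rw [h']
    conv_rhs => rw [← (toDual ℝ E).apply_symm_apply g]
    rw [toDual_apply_apply]
    rw [dualInner, real_inner_comm]
  constructor
  · intro h t
    have hcurve : HasDerivAt (fun s : ℝ =>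
        ((c s, (toDual ℝ E (deriv c s) : E →L[ℝ] ℝ)) : E × (E →L[ℝ] ℝ)))
        (deriv c t, toDual ℝ E (deriv (deriv c) t)) t :=
      ((hc t).hasDerivAt).prodMk
        (((toDual ℝ E).toContinuousLinearEquiv.hasFDerivAt).comp_hasDerivAt t
          (hc' t).hasDerivAt)
    rw [hcurve.deriv]
    have : XH (c t, toDual ℝ E (deriv c t)) =
        (φ (toDual ℝ E (deriv c t)), -(fderiv ℝ V (c t))) :=
      Prod.ext (hXH1 _) (hXH2 _)
    rw [this]
    refine Prod.ext ?_ ?_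
    · simp [hφdef]
    · show toDual ℝ E (deriv (deriv c) t) = -(fderiv ℝ V (c t))
      rw [h t]
      simp [hφdef]
  · intro h t
    have hcurve : HasDerivAt (fun s : ℝ =>
        ((c s, (toDual ℝ E (deriv c s) : E →L[ℝ] ℝ)) : E × (E →L[ℝ] ℝ)))
        (deriv c t, toDual ℝ E (deriv (deriv c) t)) t :=
      ((hc t).hasDerivAt).prodMk
        (((toDual ℝ E).toContinuousLinearEquiv.hasFDerivAt).comp_hasDerivAt t
          (hc' t).hasDerivAt)
    have h2 := (h t)
    rw [hcurve.deriv] at h2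
    have h3 : toDual ℝ E (deriv (deriv c) t) = -(fderiv ℝ V (c t)) := by
      have := congrArg Prod.snd h2
      simpa [hXH2] using this
    have := congrArg φ h3
    simpa [hφdef] using this
end
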